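/- Let A be a G-graded ring and M a G-graded (A,A)-bimodule. Then the trivial extension R = A ⋉ M, with the grading R_g = A_g ⊕ M_g, is graded NR-clean if and only if A is graded NR-clean. -/

import Mathlib

/-- An element is homogeneous w.r.t. a grading family `𝒜` if it lies in some component. -/
def Homogeneous {G : Type*} [Group G] {R : Type*} [Ring R]
    (𝒜 : G → AddSubgroup R) (x : R) : Prop := ∃ g, x ∈ 𝒜 g

/-- A graded-regular element: homogeneous `r` with `r = r * a * r` for some homogeneous `a`. -/
def GradedRegular {G : Type*} [Group G] {R : Type*} [Ring R]
    (𝒜 : G → AddSubgroup R) (r : R) : Prop :=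
  Homogeneous 𝒜 r ∧ ∃ a : R, Homogeneous 𝒜 a ∧ r = r * a * r

/-- Graded NR-clean: every homogeneous element is a sum of a graded-regular element
and a homogeneous nilpotent element. -/
def GradedNRClean {G : Type*} [Group G] {R : Type*} [Ring R]
    (𝒜 : G → AddSubgroup R) : Prop :=
  ∀ x : R, Homogeneous 𝒜 x →
    ∃ r n : R, GradedRegular 𝒜 r ∧ Homogeneous 𝒜 n ∧ IsNilpotent n ∧ x = r + n

/-- `𝒜` is a `G`-grading of the ring `R`. -/
structure IsGrading {G : Type*} [Group G] [DecidableEq G] {R : Type*} [Ring R]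
    (𝒜 : G → AddSubgroup R) : Prop where
  one_mem : (1 : R) ∈ 𝒜 1
  mul_mem : ∀ {g h : G} {a b : R}, a ∈ 𝒜 g → b ∈ 𝒜 h → a * b ∈ 𝒜 (g * h)
  isInternal : DirectSum.IsInternal 𝒜

/-- The `g`-th component of the `G`-grading on the group ring `R[G]` attached to a family
`ℬ` of additive subgroups of `R`: elements `∑ r_h h` with `r_h ∈ ℬ (g * h⁻¹)` for all `h`. -/
def groupRingComponent {G : Type*} [Group G] {R : Type*} [Ring R]
    (ℬ : G → AddSubgroup R) (g : G) : AddSubgroup (MonoidAlgebra R G) where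
  carrier := {u | ∀ h : G, u.coeff h ∈ ℬ (g * h⁻¹)}
  zero_mem' := fun h => by simpa using zero_mem (ℬ (g * h⁻¹))
  add_mem' := fun {a b} ha hb h => by
    show (a + b).coeff h ∈ ℬ (g * h⁻¹)
    rw [MonoidAlgebra.coeff_add, Finsupp.add_apply]
    exact add_mem (ha h) (hb h)
  neg_mem' := fun {a} ha h => by
    show (-a).coeff h ∈ ℬ (g * h⁻¹)
    rw [MonoidAlgebra.coeff_neg, Finsupp.neg_apply]
    exact neg_mem (ha h)

/-- The `g`-th component `A_g ⊕ M_g` of the grading on the trivial extension `A ⋉ M`. -/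
def trivExtComponent {G : Type*} [Group G] {A : Type*} [Ring A]
    {M : Type*} [AddCommGroup M] [Module A M] [Module Aᵐᵒᵖ M] [SMulCommClass A Aᵐᵒᵖ M]
    (𝒜 : G → AddSubgroup A) (ℳ : G → AddSubgroup M) (g : G) :
    AddSubgroup (TrivSqZeroExt A M) where
  carrier := {x | x.fst ∈ 𝒜 g ∧ x.snd ∈ ℳ g}
  zero_mem' := ⟨by simpa using zero_mem (𝒜 g), by simpa using zero_mem (ℳ g)⟩
  add_mem' := fun {a b} ha hb => by
    refine ⟨?_, ?_⟩
    · rw [TrivSqZeroExt.fst_add]; exact add_mem ha.1 hb.1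
    · rw [TrivSqZeroExt.snd_add]; exact add_mem ha.2 hb.2
  neg_mem' := fun {a} ha => by
    refine ⟨?_, ?_⟩
    · rw [TrivSqZeroExt.fst_neg]; exact neg_mem ha.1
    · rw [TrivSqZeroExt.snd_neg]; exact neg_mem ha.2

section Aux

variable {G : Type*} [Group G] [DecidableEq G] {A : Type*} [Ring A]
    {M : Type*} [AddCommGroup M] [Module A M] [Module Aᵐᵒᵖ M] [SMulCommClass A Aᵐᵒᵖ M]

/-- If the first component of an element of a trivial extension is nilpotent, so is it. -/
lemma aux_nilp (x : TrivSqZeroExt A M) (hx : IsNilpotent x.fst) : IsNilpotent x := by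
  obtain ⟨k, hk⟩ := hx
  refine ⟨2 * k, ?_⟩
  have hfst : (x ^ k).fst = 0 := by rw [TrivSqZeroExt.fst_pow, hk]
  have hxk : x ^ k = TrivSqZeroExt.inr ((x ^ k).snd) := by
    ext
    · rw [hfst, TrivSqZeroExt.fst_inr]
    · rw [TrivSqZeroExt.snd_inr]
  rw [two_mul, pow_add, hxk, TrivSqZeroExt.inr_mul_inr]

/-- Uniqueness from internality: if `a ∈ 𝒜 g`, `a = r + n` with `r ∈ 𝒜 g₁`, `n ∈ 𝒜 g₂`,
and `g₂ ∉ {g, g₁}`, then `n = 0`. -/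
lemma aux_unique {𝒜 : G → AddSubgroup A} (hint : DirectSum.IsInternal 𝒜)
    {g g₁ g₂ : G} {a r n : A} (ha : a ∈ 𝒜 g) (hr : r ∈ 𝒜 g₁) (hn : n ∈ 𝒜 g₂)
    (heq : a = r + n) (h2 : g₂ ≠ g) (h21 : g₂ ≠ g₁) : n = 0 := by
  have hinj := hint.injective
  have key : DirectSum.coeAddMonoidHom 𝒜 (DirectSum.of (fun i => 𝒜 i) g ⟨a, ha⟩)
      = DirectSum.coeAddMonoidHom 𝒜 (DirectSum.of (fun i => 𝒜 i) g₁ ⟨r, hr⟩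
        + DirectSum.of (fun i => 𝒜 i) g₂ ⟨n, hn⟩) := by
    simp [DirectSum.coeAddMonoidHom_of, heq]
  have := hinj key
  have := DFunLike.congr_fun this g₂
  rw [DirectSum.of_eq_of_ne _ _ _ h2] at this
  rw [DFinsupp.add_apply, DirectSum.of_eq_of_ne _ _ _ h21,
    DirectSum.of_eq_same, zero_add] at this
  exact congrArg Subtype.val this.symm

end Aux

/-- The trivial extension `A ⋉ M` of a `G`-graded ring `A` by a `G`-graded
`(A,A)`-bimodule `M`, graded by `R_g = A_g ⊕ M_g`, is graded NR-clean iff `A` is. -/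
theorem stmt19 {G : Type*} [Group G] [DecidableEq G] {A : Type*} [Ring A]
    {M : Type*} [AddCommGroup M] [Module A M] [Module Aᵐᵒᵖ M] [SMulCommClass A Aᵐᵒᵖ M]
    (𝒜 : G → AddSubgroup A) (hA : IsGrading 𝒜) (ℳ : G → AddSubgroup M)
    (hsmul : ∀ {g h : G} {a : A} {m : M}, a ∈ 𝒜 g → m ∈ ℳ h → a • m ∈ ℳ (g * h))
    (hsmul' : ∀ {g h : G} {a : A} {m : M}, a ∈ 𝒜 h → m ∈ ℳ g →
      (MulOpposite.op a) • m ∈ ℳ (g * h))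
    (hdirect : DirectSum.IsInternal ℳ) :
    GradedNRClean (trivExtComponent 𝒜 ℳ) ↔ GradedNRClean 𝒜 := by
  
  constructor
  · -- R graded NR-clean ⟹ A graded NR-clean
    intro hR a ⟨g, hag⟩
    obtain ⟨r, n, ⟨⟨gr, hr⟩, b, ⟨gb, hb⟩, hreg⟩, ⟨gn, hn⟩, ⟨k, hk⟩, hsum⟩ :=
      hR (TrivSqZeroExt.inl a) ⟨g, by simpa using hag, by simpa using zero_mem (ℳ g)⟩
    refine ⟨r.fst, n.fst, ⟨⟨gr, hr.1⟩, b.fst, ⟨gb, hb.1⟩, ?_⟩, ⟨gn, hn.1⟩, ⟨k, ?_⟩, ?_⟩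
    · conv_lhs => rw [hreg]
      rw [TrivSqZeroExt.fst_mul, TrivSqZeroExt.fst_mul]
    · rw [← TrivSqZeroExt.fst_pow, hk, TrivSqZeroExt.fst_zero]
    · have := congrArg TrivSqZeroExt.fst hsum
      simpa using this
  · -- A graded NR-clean ⟹ R graded NR-clean
    intro hAc x ⟨g, hxf, hxs⟩
    obtain ⟨r, n, ⟨⟨g1, hr⟩, b, ⟨gb, hb⟩, hreg⟩, ⟨g2, hn⟩, hnil, hsum⟩ := hAc x.fst ⟨g, hxf⟩
    -- reduce to the case where the nilpotent part lies in 𝒜 g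
    by_cases h2 : n ∈ 𝒜 g
    · refine ⟨TrivSqZeroExt.inl r, ((n, x.snd) : TrivSqZeroExt A M),
        ⟨⟨g1, by simpa using hr, by simpa using zero_mem (ℳ g1)⟩,
          TrivSqZeroExt.inl b, ⟨gb, by simpa using hb, by simpa using zero_mem (ℳ gb)⟩, ?_⟩,
        ⟨g, h2, hxs⟩, aux_nilp _ hnil, ?_⟩
      · rw [← TrivSqZeroExt.inl_mul, ← TrivSqZeroExt.inl_mul, ← hreg]
      · ext
        · show x.fst = r + n
          exact hsum
        · show x.snd = (0 : M) + x.snd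
          rw [zero_add]
    · -- n ∉ 𝒜 g : we show n = 0, so x.fst itself is graded regular
      have hg2 : g2 ≠ g := fun h => h2 (h ▸ hn)
      have hxreg : x.fst = x.fst * b * x.fst := by
        by_cases h21 : g2 = g1
        · -- then x.fst ∈ 𝒜 g2 ∩ 𝒜 g, g2 ≠ g forces x.fst = 0
          have hr2 : r ∈ 𝒜 g2 := by rw [h21]; exact hr
          have hx1 : x.fst ∈ 𝒜 g2 := by rw [hsum]; exact add_mem hr2 hn
          have hx0 : x.fst = 0 :=
            aux_unique hA.isInternal hxf (zero_mem (𝒜 g)) hx1 (zero_add _).symm hg2 hg2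
          rw [hx0, zero_mul, zero_mul]
        · have hn0 : n = 0 := aux_unique hA.isInternal hxf hr hn hsum hg2 h21
          have hxr : x.fst = r := by rw [hsum, hn0, add_zero]
          rw [hxr]; exact hreg
      refine ⟨TrivSqZeroExt.inl x.fst, TrivSqZeroExt.inr x.snd,
        ⟨⟨g, by simpa using hxf, by simpa using zero_mem (ℳ g)⟩,
          TrivSqZeroExt.inl b, ⟨gb, by simpa using hb, by simpa using zero_mem (ℳ gb)⟩, ?_⟩,
        ⟨g, by simpa using zero_mem (𝒜 g), by simpa using hxs⟩,
        ⟨2, by rw [sq, TrivSqZeroExt.inr_mul_inr]⟩, ?_⟩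
      · rw [← TrivSqZeroExt.inl_mul, ← TrivSqZeroExt.inl_mul, ← hxreg]
      · exact (TrivSqZeroExt.inl_fst_add_inr_snd_eq x).symm
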